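/- arXiv:1311.7507 — 5 statements merged into one kernel-verified Lean document; each statement's English description precedes it below -/
import Mathlib

section
/- Let F be an infinite field and let n ≥ 2 be an integer. Then there exist invertible matrices A, B ∈ M_n(F) such that the multiplicative commutator ABA⁻¹B⁻¹ is algebraic of degree exactly n over F, i.e., its minimal polynomial over F has degree n. -/
open Polynomial Matrix

/-- Evaluating a polynomial at a diagonal matrix gives the diagonal matrix of
evaluations. -/
lemma aeval_diagonal_helper {F : Type*} [Field F] {n : ℕ} (d : Fin n → F)
    (p : Polynomial F) :
    Polynomial.aeval (Matrix.diagonal d) p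
      = Matrix.diagonal (fun i => p.eval (d i)) := by
  have h := Polynomial.aeval_algHom_apply (Matrix.diagonalAlgHom (n := Fin n) F) d p
  have h2 : Polynomial.aeval d p = fun i => p.eval (d i) := by
    funext i
    have := Polynomial.aeval_algHom_apply (Pi.evalAlgHom F (fun _ : Fin n => F) i) d p
    simpa [Polynomial.coe_aeval_eq_eval] using this.symm
  simpa [Matrix.diagonalAlgHom_apply, h2] using h

/-- A diagonal matrix commutes with a permutation matrix after permuting entries. -/
lemma diagonal_mul_permMatrix_helper {F : Type*} [Field F] {n : ℕ}
    (σ : Equiv.Perm (Fin n)) (a : Fin n → F) :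
    Matrix.diagonal a * σ.permMatrix F
      = σ.permMatrix F * Matrix.diagonal (a ∘ ⇑σ⁻¹) := by
  ext i j
  rw [Matrix.diagonal_mul, Matrix.mul_diagonal]
  simp only [Equiv.Perm.permMatrix, PEquiv.toMatrix_apply, Equiv.toPEquiv_apply,
    Option.mem_def, Option.some.injEq, Function.comp_apply]
  by_cases h : σ i = j
  · subst h
    simp
  · simp [h, fun hh : j = σ i => h hh.symm]

/-- A permutation matrix times the permutation matrix of the inverse is one. -/
lemma permMatrix_mul_inv_helper {F : Type*} [Field F] {n : ℕ}
    (σ : Equiv.Perm (Fin n)) :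
    σ.permMatrix F * (σ⁻¹).permMatrix F = 1 := by
  rw [Equiv.Perm.permMatrix, Equiv.Perm.permMatrix, ← PEquiv.toMatrix_trans,
    ← Equiv.toPEquiv_trans]
  have : σ.trans σ⁻¹ = Equiv.refl (Fin n) := by
    ext x; simp
  rw [this, Equiv.toPEquiv_refl, PEquiv.toMatrix_refl]

/-- Conjugating a diagonal matrix by a permutation matrix permutes the diagonal. -/
lemma permMatrix_conj_diagonal_helper {F : Type*} [Field F] {n : ℕ}
    (σ : Equiv.Perm (Fin n)) (a : Fin n → F) :
    σ.permMatrix F * Matrix.diagonal a * (σ⁻¹).permMatrix F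
      = Matrix.diagonal (a ∘ ⇑σ) := by
  have h1 : ((a ∘ ⇑σ) ∘ ⇑σ⁻¹) = a := by
    funext i; simp
  have h2 : σ.permMatrix F * Matrix.diagonal a
      = Matrix.diagonal (a ∘ ⇑σ) * σ.permMatrix F := by
    rw [diagonal_mul_permMatrix_helper σ (a ∘ ⇑σ), h1]
  rw [h2, mul_assoc, permMatrix_mul_inv_helper, mul_one]

/-- The minimal polynomial of a diagonal matrix with pairwise distinct entries has
degree the size of the matrix. -/
lemma minpoly_diagonal_helper {F : Type*} [Field F] {n : ℕ} [NeZero n]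
    (e : Fin n → F) (he : Function.Injective e) :
    (minpoly F (Matrix.diagonal e)).natDegree = n := by
  classical
  set M := Matrix.diagonal e with hM
  have hint : IsIntegral F M := IsIntegral.of_finite F M
  have hne : minpoly F M ≠ 0 := minpoly.ne_zero hint
  -- each e i is a root
  have hroot : ∀ i, (minpoly F M).eval (e i) = 0 := by
    intro i
    have h0 : Polynomial.aeval M (minpoly F M) = 0 := minpoly.aeval F M
    rw [hM, aeval_diagonal_helper] at h0
    have := congrFun (congrFun h0 i) i
    simpa [Matrix.diagonal_apply_eq] using this
  -- lower bound
  have hlow : n ≤ (minpoly F M).natDegree := by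
    have hsub : Finset.univ.image e ⊆ (minpoly F M).roots.toFinset := by
      intro x hx
      obtain ⟨i, _, rfl⟩ := Finset.mem_image.1 hx
      rw [Multiset.mem_toFinset, Polynomial.mem_roots hne]
      exact hroot i
    calc n = (Finset.univ.image e).card := by
            rw [Finset.card_image_of_injective _ he, Finset.card_univ, Fintype.card_fin]
      _ ≤ (minpoly F M).roots.toFinset.card := Finset.card_le_card hsub
      _ ≤ Multiset.card (minpoly F M).roots := Multiset.toFinset_card_le _
      _ ≤ (minpoly F M).natDegree := Polynomial.card_roots' _
  -- upper bound
  have hup : (minpoly F M).natDegree ≤ n := by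
    have hdvd : minpoly F M ∣ M.charpoly := Matrix.minpoly_dvd_charpoly M
    have := Polynomial.natDegree_le_of_dvd hdvd (Matrix.charpoly_monic M).ne_zero
    simpa [Matrix.charpoly_natDegree_eq_dim] using this
  omega

/-- **Lemma (Bien, Lemma 3.1).** Let `F` be an infinite field and `n ≥ 2` an integer.
Then there exist invertible matrices `A B : Matrix (Fin n) (Fin n) F` such that the
multiplicative commutator `A * B * A⁻¹ * B⁻¹` is algebraic of degree exactly `n` over
`F`, i.e. its minimal polynomial over `F` has degree `n`. -/
theorem exists_mul_commutator_minpoly_natDegree_eq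
    (F : Type*) [Field F] [Infinite F] (n : ℕ) (hn : 2 ≤ n) :
    ∃ A B : Matrix (Fin n) (Fin n) F, IsUnit A ∧ IsUnit B ∧
      (minpoly F (A * B * A⁻¹ * B⁻¹)).natDegree = n := by
  classical
  obtain ⟨m, rfl⟩ : ∃ m, n = m + 2 := ⟨n - 2, by omega⟩
  set n := m + 2 with hn2
  -- bound for exponents
  set K : ℕ := 3 ^ n with hK
  set N : ℕ := 4 * K with hNdef
  -- find a suitable scalar t
  set p : Polynomial F := Polynomial.X * ∏ k ∈ Finset.Icc 1 N, (Polynomial.X ^ k - 1)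
    with hp
  have hpne : p ≠ 0 := by
    apply mul_ne_zero Polynomial.X_ne_zero
    apply (Polynomial.monic_prod_of_monic _ _ ?_).ne_zero
    intro k hk
    have hk0 : k ≠ 0 := by
      have := (Finset.mem_Icc.1 hk).1; omega
    simpa using Polynomial.monic_X_pow_sub_C (1 : F) hk0
  obtain ⟨t, ht⟩ := Infinite.exists_notMem_finset p.roots.toFinset
  have hteval : p.eval t ≠ 0 := by
    intro h
    exact ht (Multiset.mem_toFinset.2 ((Polynomial.mem_roots hpne).2 h))
  have ht0 : t ≠ 0 := by
    intro h
    apply hteval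
    rw [h, hp]
    simp
  have hpow : ∀ k ∈ Finset.Icc 1 N, t ^ k ≠ 1 := by
    intro k hk h1
    apply hteval
    have hdvd : (Polynomial.X ^ k - 1 : Polynomial F) ∣ p :=
      Dvd.dvd.mul_left (Finset.dvd_prod_of_mem _ hk) _
    obtain ⟨q, hq⟩ := hdvd
    rw [hq]
    simp [h1]
  set u : Fˣ := Units.mk0 t ht0 with hu
  -- the permutation and exponents
  set σ : Equiv.Perm (Fin n) := finRotate n with hσ
  set z : Fin n → ℤ := fun i => ((3 ^ (i : ℕ) : ℕ) : ℤ) with hz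
  set d : Fin n → Fˣ := fun i => u ^ (z i) with hd
  set e : Fin n → Fˣ := fun i => d i * (d (σ i))⁻¹ with he
  -- value of σ
  have hσval : ∀ i : Fin n, ((σ i : ℕ)) = if (i : ℕ) = m + 1 then 0 else (i : ℕ) + 1 := by
    intro i
    rw [hσ]
    show ((finRotate (m + 1 + 1)) i : ℕ) = _
    rw [finRotate_succ_apply, Fin.val_add_one]
    by_cases h : i = Fin.last (m + 1)
    · simp [h, Fin.val_last]
    · have : (i : ℕ) ≠ m + 1 := by
        intro hh
        exact h (Fin.ext (by simpa [Fin.val_last] using hh))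
      simp [h, this]
  -- the difference map is injective
  have hzinj : ∀ i j : Fin n, i ≠ j → z i - z (σ i) ≠ z j - z (σ j) := by
    intro i j hij heq
    have hi : (i : ℕ) < m + 2 := i.isLt
    have hj : (j : ℕ) < m + 2 := j.isLt
    have hne : (i : ℕ) ≠ (j : ℕ) := fun h => hij (Fin.ext h)
    rw [hz] at heq
    simp only at heq
    rw [hσval i, hσval j] at heq
    by_cases h1 : (i : ℕ) = m + 1 <;> by_cases h2 : (j : ℕ) = m + 1
    · exact hne (h1.trans h2.symm)
    · -- LHS positive, RHS negative
      rw [if_pos h1, if_neg h2] at heq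
      have e1 : (3 : ℤ) ≤ ((3 ^ (i : ℕ) : ℕ) : ℤ) := by
        have : 3 ^ 1 ≤ 3 ^ (i : ℕ) := Nat.pow_le_pow_right (by norm_num) (by omega)
        exact_mod_cast by simpa using this
      have e2 : (1 : ℤ) ≤ ((3 ^ (j : ℕ) : ℕ) : ℤ) := by
        exact_mod_cast Nat.one_le_two_pow.trans_eq rfl |>.trans
          (Nat.pow_le_pow_left (by norm_num) _) |>.trans
          (Nat.pow_le_pow_right (by norm_num) (Nat.zero_le _))
      have e3 : ((3 ^ ((j : ℕ) + 1) : ℕ) : ℤ) = 3 * ((3 ^ (j : ℕ) : ℕ) : ℤ) := by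
        push_cast [pow_succ]; ring
      have e4 : ((3 ^ (0 : ℕ) : ℕ) : ℤ) = 1 := by norm_num
      rw [e4] at heq
      omega
    · rw [if_neg h1, if_pos h2] at heq
      have e1 : (3 : ℤ) ≤ ((3 ^ (j : ℕ) : ℕ) : ℤ) := by
        have : 3 ^ 1 ≤ 3 ^ (j : ℕ) := Nat.pow_le_pow_right (by norm_num) (by omega)
        exact_mod_cast by simpa using this
      have e2 : (1 : ℤ) ≤ ((3 ^ (i : ℕ) : ℕ) : ℤ) := by
        have : 1 ≤ 3 ^ (i : ℕ) := Nat.one_le_pow _ _ (by norm_num)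
        exact_mod_cast this
      have e3 : ((3 ^ ((i : ℕ) + 1) : ℕ) : ℤ) = 3 * ((3 ^ (i : ℕ) : ℕ) : ℤ) := by
        push_cast [pow_succ]; ring
      have e4 : ((3 ^ (0 : ℕ) : ℕ) : ℤ) = 1 := by norm_num
      rw [e4] at heq
      omega
    · rw [if_neg h1, if_neg h2] at heq
      have e3 : ((3 ^ ((i : ℕ) + 1) : ℕ) : ℤ) = 3 * ((3 ^ (i : ℕ) : ℕ) : ℤ) := by
        push_cast [pow_succ]; ring
      have e4 : ((3 ^ ((j : ℕ) + 1) : ℕ) : ℤ) = 3 * ((3 ^ (j : ℕ) : ℕ) : ℤ) := by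
        push_cast [pow_succ]; ring
      have : ((3 ^ (i : ℕ) : ℕ) : ℤ) = ((3 ^ (j : ℕ) : ℕ) : ℤ) := by omega
      have hnat : (3 : ℕ) ^ (i : ℕ) = 3 ^ (j : ℕ) := by exact_mod_cast this
      exact hne (Nat.pow_right_injective (by norm_num) hnat)
  -- bound on exponents
  have hzbound : ∀ i : Fin n, (0 : ℤ) ≤ z i ∧ z i ≤ (K : ℤ) := by
    intro i
    constructor
    · rw [hz]; positivity
    · show ((3 ^ (i : ℕ) : ℕ) : ℤ) ≤ ((3 ^ n : ℕ) : ℤ)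
      exact_mod_cast Nat.pow_le_pow_right (by norm_num) (le_of_lt i.isLt)
  -- e is injective (as an F-valued function)
  have heinj : Function.Injective (fun i => ((e i : Fˣ) : F)) := by
    intro i j hij'
    by_contra hij
    have hu2 : e i = e j := Units.ext hij'
    rw [he] at hu2
    simp only at hu2
    have hw : u ^ (z i - z (σ i)) = u ^ (z j - z (σ j)) := by
      rw [_root_.zpow_sub, _root_.zpow_sub]
      simpa [hd] using hu2
    set w : ℤ := (z i - z (σ i)) - (z j - z (σ j)) with hwdef
    have hw1 : u ^ w = 1 := by
      rw [hwdef, _root_.zpow_sub, hw, mul_inv_cancel]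
    have hwne : w ≠ 0 := by
      rw [hwdef]
      intro h
      exact hzinj i j hij (by omega)
    have hwb : w.natAbs ≤ N := by
      obtain ⟨a1, a2⟩ := hzbound i
      obtain ⟨b1, b2⟩ := hzbound (σ i)
      obtain ⟨c1, c2⟩ := hzbound j
      obtain ⟨d1, d2⟩ := hzbound (σ j)
      rw [hNdef]
      omega
    have hwmem : w.natAbs ∈ Finset.Icc 1 N := Finset.mem_Icc.2 ⟨by omega, hwb⟩
    have huabs : u ^ (w.natAbs : ℤ) = 1 := by
      rcases Int.natAbs_eq w with h | h
      · rw [← h, hw1]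
      · have : u ^ (-w) = 1 := by rw [_root_.zpow_neg, hw1, inv_one]
        rw [show ((w.natAbs : ℤ)) = -w by omega, this]
    have huabs' : u ^ w.natAbs = 1 := by
      rw [← zpow_natCast u w.natAbs]; exact huabs
    have : t ^ w.natAbs = 1 := by
      have h3 := congrArg (Units.val) huabs'
      rw [Units.val_pow_eq_pow_val, Units.val_one] at h3
      simpa [hu] using h3
    exact hpow _ hwmem this
  -- the matrices
  set A : Matrix (Fin n) (Fin n) F := Matrix.diagonal (fun i => ((d i : Fˣ) : F)) with hA
  set A' : Matrix (Fin n) (Fin n) F := Matrix.diagonal (fun i => (((d i)⁻¹ : Fˣ) : F))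
    with hA'
  set B : Matrix (Fin n) (Fin n) F := σ.permMatrix F with hB
  set B' : Matrix (Fin n) (Fin n) F := (σ⁻¹).permMatrix F with hB'
  have hAA' : A * A' = 1 := by
    rw [hA, hA', Matrix.diagonal_mul_diagonal]
    have : (fun i => ((d i : Fˣ) : F) * (((d i)⁻¹ : Fˣ) : F)) = fun _ => (1 : F) := by
      funext i
      rw [← Units.val_mul, mul_inv_cancel, Units.val_one]
    rw [this, Matrix.diagonal_one]
  have hBB' : B * B' = 1 := permMatrix_mul_inv_helper σ
  have hAinv : A⁻¹ = A' := Matrix.inv_eq_right_inv hAA'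
  have hBinv : B⁻¹ = B' := Matrix.inv_eq_right_inv hBB'
  have hAunit : IsUnit A :=
    ⟨⟨A, A', hAA', mul_eq_one_comm.1 hAA'⟩, rfl⟩
  have hBunit : IsUnit B :=
    ⟨⟨B, B', hBB', mul_eq_one_comm.1 hBB'⟩, rfl⟩
  refine ⟨A, B, hAunit, hBunit, ?_⟩
  rw [hAinv, hBinv]
  -- compute the commutator
  have hcomm : A * B * A' * B' = Matrix.diagonal (fun i => ((e i : Fˣ) : F)) := by
    rw [hA, hB, hA', hB', diagonal_mul_permMatrix_helper]
    rw [mul_assoc (σ.permMatrix F), Matrix.diagonal_mul_diagonal,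
      permMatrix_conj_diagonal_helper]
    apply congrArg Matrix.diagonal
    funext i
    simp [he, Function.comp, Units.val_mul, Equiv.Perm.coe_inv, Equiv.symm_apply_apply]
  rw [hcomm]
  have : NeZero n := ⟨by omega⟩
  exact minpoly_diagonal_helper _ heinj
end

section
/- Let F be an infinite field and let n > 2 be an integer. Then there exist matrices A, B ∈ M_n(F) such that the additive commutator AB − BA is algebraic of degree exactly n over F, i.e., its minimal polynomial over F has degree n. -/
open Polynomial Matrix


private def shiftM (F : Type*) [Field F] (n : ℕ) : Matrix (Fin n) (Fin n) F :=
  Matrix.of fun i j => if (j : ℕ) = (i : ℕ) + 1 then (1 : F) else 0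

private lemma shiftM_pow (F : Type*) [Field F] (n k : ℕ) :
    (shiftM F n) ^ k
      = Matrix.of fun i j : Fin n => if (j : ℕ) = (i : ℕ) + k then (1 : F) else 0 := by
  induction k with
  | zero =>
    ext i j
    simp [Matrix.one_apply, Fin.ext_iff, eq_comm]
  | succ k ih =>
    ext i j
    rw [pow_succ, ih]
    simp only [Matrix.mul_apply, Matrix.of_apply, shiftM]
    by_cases h : (i : ℕ) + k < n
    · rw [Finset.sum_eq_single (⟨(i : ℕ) + k, h⟩ : Fin n)]
      · simp [← add_assoc]
      · intro b _ hb
        rw [if_neg, zero_mul]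
        simpa [Fin.ext_iff] using hb
      · simp
    · have h1 : ∀ b : Fin n, ¬ ((b : ℕ) = (i : ℕ) + k) := fun b hb =>
        h (hb ▸ b.isLt)
      have h2 : ¬ ((j : ℕ) = (i : ℕ) + (k + 1)) := fun hj =>
        h (by have := j.isLt; omega)
      simp [h1, h2]


/-- **Lemma (Bien, Lemma 3.3).** Let `F` be an infinite field and `n > 2` an integer.
Then there exist matrices `A B : Matrix (Fin n) (Fin n) F` such that the additive
commutator `A * B - B * A` is algebraic of degree exactly `n` over `F`, i.e. its
minimal polynomial over `F` has degree `n`. -/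
theorem exists_add_commutator_minpoly_natDegree_eq
    (F : Type*) [Field F] [Infinite F] (n : ℕ) (hn : 2 < n) :
    ∃ A B : Matrix (Fin n) (Fin n) F,
      (minpoly F (A * B - B * A)).natDegree = n := by
  have hn0 : 0 < n := by omega
  haveI : NeZero n := ⟨by omega⟩
  refine ⟨shiftM F n, Matrix.diagonal fun i => ((i : ℕ) : F), ?_⟩
  have hcomm : shiftM F n * Matrix.diagonal (fun i : Fin n => ((i : ℕ) : F))
      - Matrix.diagonal (fun i : Fin n => ((i : ℕ) : F)) * shiftM F n = shiftM F n := by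
    ext i j
    simp only [Matrix.sub_apply, Matrix.mul_diagonal, Matrix.diagonal_mul, shiftM,
      Matrix.of_apply]
    by_cases h : (j : ℕ) = (i : ℕ) + 1
    · rw [if_pos h, h]
      push_cast
      ring
    · simp [h]
  rw [hcomm]
  have hmin : minpoly F (shiftM F n) = X ^ n := by
    refine (minpoly.unique F _ (monic_X_pow n) ?_ ?_).symm
    · rw [map_pow, aeval_X, shiftM_pow]
      ext i j
      have : ¬ ((j : ℕ) = (i : ℕ) + n) := fun hj => by have := j.isLt; omega
      simp [this]
    · intro q hq hq0
      rw [degree_X_pow, degree_eq_natDegree hq.ne_zero, Nat.cast_le]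
      by_contra hlt
      push_neg at hlt
      set k := q.natDegree with hk
      have hkn : k < n := hlt
      have heq : (∑ m ∈ Finset.range (k + 1), q.coeff m • (shiftM F n) ^ m) = 0 :=
        (aeval_eq_sum_range (x := shiftM F n) (p := q)).symm.trans hq0
      have := congrArg (fun M : Matrix (Fin n) (Fin n) F =>
        M (0 : Fin n) (⟨k, hkn⟩ : Fin n)) heq
      simp only [Matrix.sum_apply, Matrix.smul_apply, shiftM_pow, Matrix.of_apply,
        Matrix.zero_apply, smul_eq_mul] at this
      rw [Finset.sum_eq_single k] at this
      · simp [hk, hq.coeff_natDegree] at this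
      · intro b _ hb
        simp [Fin.val_zero, hb, Ne.symm hb]
      · intro hk'
        exact absurd (Finset.self_mem_range_succ k) hk'
  rw [hmin, natDegree_X_pow]
end

section
/- Let F be a field and let m be a positive integer. Then for every matrix A ∈ M_m(F) and all matrices R_1, R_2, …, R_m ∈ M_m(F), one has g_m(A, R_1, R_2, …, R_m) = 0; in other words, g_m is a generalized polynomial identity of M_m(F). -/
/-- The generalized polynomial
`g_n(a, r_1, …, r_n) = Σ_{δ ∈ S_{n+1}} sign(δ) · a^{δ 0} * r_1 * a^{δ 1} * ⋯ * r_n * a^{δ n}`,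
where the sum runs over all permutations `δ` of `{0, 1, …, n}`. -/
def gExpr {R : Type*} [Ring R] (n : ℕ) (a : R) (r : Fin n → R) : R :=
  ∑ δ : Equiv.Perm (Fin (n + 1)),
    (Equiv.Perm.sign δ : ℤ) •
      (a ^ ((δ 0 : Fin (n + 1)) : ℕ) *
        (List.ofFn fun i : Fin n => r i * a ^ ((δ i.succ : Fin (n + 1)) : ℕ)).prod)

section aux

variable {F : Type*} [Field F] {M : Type*} [Ring M] [Algebra F M]

/-- the multilinear map `v ↦ (c 0 * v 0) * (c 1 * v 1) * ⋯` -/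
def interMap (F : Type*) [Field F] {M : Type*} [Ring M] [Algebra F M]
    (n : ℕ) (c : Fin n → M) : MultilinearMap F (fun _ : Fin n => M) M :=
  (MultilinearMap.mkPiAlgebraFin F n M).compLinearMap (fun i => LinearMap.mulLeft F (c i))

theorem interMap_apply (n : ℕ) (c v : Fin n → M) :
    interMap F n c v = (List.ofFn fun i => c i * v i).prod := by
  simp [interMap]

theorem gExpr_eq_alternatization (n : ℕ) (a : M) (r : Fin n → M) :
    gExpr n a r =
      (interMap F (n + 1) (Fin.cons 1 r)).alternatization
        (fun i : Fin (n + 1) => a ^ (i : ℕ)) := by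
  rw [MultilinearMap.alternatization_apply, gExpr]
  refine Finset.sum_congr rfl fun δ _ => ?_
  rw [MultilinearMap.domDomCongr_apply, interMap_apply, Units.smul_def]
  congr 1
  simp [List.ofFn_succ, Fin.cons_zero, Fin.cons_succ]

end aux

/-- **Fact.** For any field `F` and positive integer `m`, the expression `g_m` is a
generalized polynomial identity of the matrix ring `M_m(F)`: for every matrix `A` and
all matrices `R_1, …, R_m` over `F`, one has `g_m(A, R_1, …, R_m) = 0`. -/
theorem gExpr_eq_zero_matrix
    (F : Type*) [Field F] (m : ℕ) (hm : 0 < m)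
    (A : Matrix (Fin m) (Fin m) F) (R : Fin m → Matrix (Fin m) (Fin m) F) :
    gExpr m A R = 0 := by
  rw [gExpr_eq_alternatization (F := F)]
  apply AlternatingMap.map_linearDependent
  rw [Fintype.not_linearIndependent_iff]
  refine ⟨fun i => A.charpoly.coeff i, ?_, Fin.last m, ?_⟩
  · have h := Matrix.aeval_self_charpoly A
    rw [Polynomial.aeval_eq_sum_range, Matrix.charpoly_natDegree_eq_dim,
      Fintype.card_fin] at h
    rw [Fin.sum_univ_eq_sum_range (fun i => A.charpoly.coeff i • A ^ i) (m+1)]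
    exact h
  · simp only [Fin.val_last]
    have : A.charpoly.coeff m = 1 := by
      have := A.charpoly_monic
      rw [Polynomial.Monic, Polynomial.leadingCoeff, Matrix.charpoly_natDegree_eq_dim,
        Fintype.card_fin] at this
      exact this
    rw [this]; exact one_ne_zero
end

section
/- Let D be a division ring whose center is the field F, with dim_F D = n² finite (so D has degree n over F), and let K be a subfield of D containing F. Then dim_F K ≤ n, and equality dim_F K = n holds if and only if K is a maximal subfield of D. -/
open Module TensorProduct


/-- Artin-style independence: in a division ring `D` with center `F`, if `a i` are
`F`-linearly independent and `∑ i, a i * x * b i = 0` for all `x`, then all `b i = 0`. -/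
theorem indep_aux (F D : Type*) [Field F] [DivisionRing D] [Algebra F D]
    (hc : ∀ x : D, (∀ y : D, y * x = x * y) → ∃ c : F, algebraMap F D c = x) :
    ∀ (r : ℕ) (a b : Fin r → D), LinearIndependent F a →
      (∀ x : D, ∑ i, a i * x * b i = 0) → ∀ i, b i = 0 := by
  intro r
  induction r with
  | zero => intro a b _ _ i; exact i.elim0
  | succ r ih =>
    intro a b ha hx
    by_cases hb : b (Fin.last r) = 0
    · -- reduce to the first r terms
      have h' : ∀ x : D, ∑ i : Fin r, (a ∘ Fin.castSucc) i * x * (b ∘ Fin.castSucc) i = 0 := by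
        intro x
        have := hx x
        rw [Fin.sum_univ_castSucc] at this
        simpa [hb] using this
      have h0 := ih (a ∘ Fin.castSucc) (b ∘ Fin.castSucc)
        (ha.comp _ (Fin.castSucc_injective r)) h'
      intro i
      rcases Fin.eq_castSucc_or_eq_last i with ⟨j, rfl⟩ | rfl
      · exact h0 j
      · exact hb
    · exfalso
      set β := b (Fin.last r) with hβ
      set b' : Fin (r + 1) → D := fun i => b i * β⁻¹ with hb'
      have hx' : ∀ x : D, ∑ i, a i * x * b' i = 0 := by
        intro x
        have : ∑ i, a i * x * b' i = (∑ i, a i * x * b i) * β⁻¹ := by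
          rw [Finset.sum_mul]
          exact Finset.sum_congr rfl fun i _ => by rw [hb']; noncomm_ring
        rw [this, hx x, zero_mul]
      have hlast : b' (Fin.last r) = 1 := by
        rw [hb']; exact mul_inv_cancel₀ hb
      -- each b' i (i < r) is central
      have hcomm : ∀ (j : Fin r) (y : D), y * b' (Fin.castSucc j) = b' (Fin.castSucc j) * y := by
        intro j y
        have key : ∀ x : D,
            ∑ i : Fin r, (a ∘ Fin.castSucc) i * x * (y * b' (Fin.castSucc i) - b' (Fin.castSucc i) * y) = 0 := by
          intro x
          have h1 := hx' (x * y)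
          have h2 : (∑ i, a i * x * b' i) * y = 0 := by rw [hx' x, zero_mul]
          rw [Finset.sum_mul] at h2
          have h3 : ∑ i, (a i * (x * y) * b' i - a i * x * b' i * y) = 0 := by
            rw [Finset.sum_sub_distrib, h1, h2, sub_zero]
          rw [Fin.sum_univ_castSucc] at h3
          have hlast' : a (Fin.last r) * (x * y) * b' (Fin.last r)
              - a (Fin.last r) * x * b' (Fin.last r) * y = 0 := by
            rw [hlast, mul_one, mul_one, mul_assoc, sub_self]
          rw [hlast', add_zero] at h3
          calc ∑ i : Fin r, (a ∘ Fin.castSucc) i * x *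
                (y * b' (Fin.castSucc i) - b' (Fin.castSucc i) * y)
              = ∑ i : Fin r, (a (Fin.castSucc i) * (x * y) * b' (Fin.castSucc i)
                - a (Fin.castSucc i) * x * b' (Fin.castSucc i) * y) := by
                exact Finset.sum_congr rfl fun i _ => by simp only [Function.comp]; noncomm_ring
            _ = 0 := h3
        have := ih (a ∘ Fin.castSucc) (fun i => y * b' (Fin.castSucc i) - b' (Fin.castSucc i) * y)
          (ha.comp _ (Fin.castSucc_injective r)) key j
        exact sub_eq_zero.mp this
      -- so b' i = algebraMap c i
      have hcen : ∀ i : Fin (r + 1), ∃ c : F, algebraMap F D c = b' i := by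
        intro i
        rcases Fin.eq_castSucc_or_eq_last i with ⟨j, rfl⟩ | rfl
        · exact hc _ (hcomm j)
        · exact ⟨1, by rw [hlast, map_one]⟩
      choose c hcval using hcen
      -- plug x = 1
      have h1 : ∑ i, c i • a i = 0 := by
        have := hx' 1
        calc ∑ i, c i • a i = ∑ i, a i * 1 * b' i := by
              refine Finset.sum_congr rfl fun i _ => ?_
              rw [← hcval i, Algebra.smul_def, mul_one]
              exact Algebra.commutes (c i) (a i)
          _ = 0 := this
      have hc0 := linearIndependent_iff'.mp ha Finset.univ c (by simpa using h1)
      have := hcval (Fin.last r)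
      rw [hc0 (Fin.last r) (Finset.mem_univ _), map_zero, hlast] at this
      exact one_ne_zero this.symm

theorem indep_aux2 (F D : Type*) [Field F] [DivisionRing D] [Algebra F D]
    (hc : ∀ x : D, (∀ y : D, y * x = x * y) → ∃ c : F, algebraMap F D c = x)
    {ι : Type*} (s : Finset ι) (a b : ι → D) (ha : LinearIndependent F a)
    (hx : ∀ x : D, ∑ i ∈ s, a i * x * b i = 0) : ∀ i ∈ s, b i = 0 := by
  classical
  set e := s.equivFin with he
  have hinj : Function.Injective (fun j : Fin s.card => (e.symm j : ι)) :=
    Subtype.val_injective.comp e.symm.injective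
  have key := indep_aux F D hc s.card (fun j => a (e.symm j)) (fun j => b (e.symm j))
    (ha.comp _ hinj)
    (fun x =>
      (Equiv.sum_comp e.symm (fun i : s => a i.1 * x * b i.1)).trans
        ((Finset.sum_coe_sort s (fun i => a i * x * b i)).trans (hx x)))
  intro i hi
  have := key (e ⟨i, hi⟩)
  simpa using this

section Aux

variable (F D : Type*) [Field F] [DivisionRing D] [Algebra F D]

/-- A subfield (division subring) containing the image of `F` as an `F`-submodule of `D`. -/
def sfSub (K : Subfield D) (hK : Set.range (algebraMap F D) ⊆ (K : Set D)) :
    Submodule F D where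
  carrier := K
  add_mem' := fun ha hb => K.add_mem ha hb
  zero_mem' := K.zero_mem
  smul_mem' := fun c x hx => by
    rw [Algebra.smul_def]; exact K.mul_mem (hK ⟨c, rfl⟩) hx

@[simp] lemma mem_sfSub {K : Subfield D} {hK} {x : D} : x ∈ sfSub F D K hK ↔ x ∈ K := Iff.rfl

variable {D} in
/-- The centralizer of a set in a division ring, as a subfield (division subring). -/
def cenSf (s : Set D) : Subfield D :=
  { Subring.centralizer s with
    inv_mem' := fun x hx => Set.inv_mem_centralizer₀ hx }

variable {D} in
lemma mem_cenSf {s : Set D} {x : D} : x ∈ cenSf s ↔ ∀ g ∈ s, g * x = x * g :=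
  Subring.mem_centralizer_iff

lemma range_subset_cenSf (s : Set D) : Set.range (algebraMap F D) ⊆ (cenSf s : Set D) := by
  rintro - ⟨c, rfl⟩
  exact mem_cenSf.mpr fun g _ => (Algebra.commutes c g).symm

end Aux

/-- The `F`-dimension of a subfield as a subtype (with the restricted algebra structure)
agrees with its `F`-dimension as a submodule of `D`. -/
lemma bridge (F D : Type*) [Field F] [DivisionRing D] [Algebra F D]
    (K : Subfield D) (hK : Set.range (algebraMap F D) ⊆ (K : Set D)) :
    letI : Algebra F K :=
      (((algebraMap F D).codRestrict K.toSubring fun x => hK ⟨x, rfl⟩).toAlgebra'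
        (fun c x => Subtype.ext (Algebra.commutes c x.1)))
    Module.finrank F K = Module.finrank F (sfSub F D K hK) := by
  letI : Algebra F K :=
    (((algebraMap F D).codRestrict K.toSubring fun x => hK ⟨x, rfl⟩).toAlgebra'
      (fun c x => Subtype.ext (Algebra.commutes c x.1)))
  refine LinearEquiv.finrank_eq (?_ : K ≃ₗ[F] sfSub F D K hK)
  exact
  { toFun := fun x => ⟨x.1, x.2⟩
    invFun := fun x => ⟨x.1, x.2⟩
    map_add' := fun x y => rfl
    map_smul' := fun a x => Subtype.ext (by
      show ((a • x : K) : D) = a • (x.1 : D)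
      rw [Algebra.smul_def a (x.1 : D)]
      rfl)
    left_inv := fun x => rfl
    right_inv := fun x => rfl }

set_option maxHeartbeats 2000000 in
set_option synthInstance.maxHeartbeats 200000 in
theorem crux (F D : Type*) [Field F] [DivisionRing D] [Algebra F D]
    (hc : ∀ x : D, (∀ y : D, y * x = x * y) → ∃ c : F, algebraMap F D c = x)
    [FiniteDimensional F D]
    (K : Subfield D) (hK : Set.range (algebraMap F D) ⊆ (K : Set D))
    (hCr : Set.range (algebraMap F D) ⊆ (cenSf (K : Set D) : Set D)) :
    Module.finrank F (sfSub F D K hK) *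
      Module.finrank F (sfSub F D (cenSf (K : Set D)) hCr) = Module.finrank F D := by
  classical
  letI : Algebra F K :=
    (((algebraMap F D).codRestrict K.toSubring fun x => hK ⟨x, rfl⟩).toAlgebra'
      (fun c x => Subtype.ext (Algebra.commutes c x.1)))
  set C : Subfield D := cenSf (K : Set D) with hC
  letI : Algebra F C :=
    (((algebraMap F D).codRestrict C.toSubring fun x => hCr ⟨x, rfl⟩).toAlgebra'
      (fun c x => Subtype.ext (Algebra.commutes c x.1)))
  haveI : IsScalarTower F C D := ⟨fun a c x => by
    show ((a • c : C) : D) * x = a • (c.1 * x)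
    rw [Algebra.smul_def, Algebra.smul_def a (c.1 * x)]
    show (algebraMap F D a) * c.1 * x = _
    rw [mul_assoc]⟩
  haveI : Module.Finite C D := Module.Finite.of_restrictScalars_finite F C D
  set d := finrank C D with hd
  let xB : Basis (Fin d) C D := Module.finBasis C D
  -- the algebra B
  let fK : K →ₐ[F] D := { toRingHom := K.subtype, commutes' := fun r => rfl }
  let ΦL : K →ₐ[F] Module.End F D := (Algebra.lmul F D).comp fK
  let ΦR : Dᵐᵒᵖ →ₐ[F] Module.End F D :=
  { toFun := fun d => LinearMap.mulRight F d.unop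
    map_one' := by ext z; simp
    map_mul' := fun a b => by ext z; simp [mul_assoc]
    map_zero' := by ext z; simp
    map_add' := fun a b => by ext z; simp [mul_add]
    commutes' := fun r => by
      ext z
      simp only [LinearMap.mulRight_apply, MulOpposite.algebraMap_apply, MulOpposite.unop_op,
        Module.algebraMap_end_apply]
      rw [← Algebra.commutes r z, Algebra.smul_def] }
  have hcomm : ∀ (k : K) (x : Dᵐᵒᵖ), Commute (ΦL k) (ΦR x) := by
    intro k x
    show _ * _ = _ * _
    ext z
    show k.1 * (z * x.unop) = (k.1 * z) * x.unop
    rw [mul_assoc]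
  let Φ : (K ⊗[F] Dᵐᵒᵖ) →ₐ[F] Module.End F D := Algebra.TensorProduct.lift ΦL ΦR hcomm
  letI : Module (K ⊗[F] Dᵐᵒᵖ) D := Module.compHom D Φ.toRingHom
  have tsmul : ∀ (k : K) (e : Dᵐᵒᵖ) (x : D), (k ⊗ₜ[F] e) • x = k.1 * x * e.unop := by
    intro k e x
    show Φ (k ⊗ₜ e) x = _
    rw [Algebra.TensorProduct.lift_tmul]
    show k.1 * (x * e.unop) = _
    rw [mul_assoc]
  have bsmul : ∀ (b : K ⊗[F] Dᵐᵒᵖ) (x : D), b • x = Φ b x := fun _ _ => rfl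
  -- D is a simple module over B
  haveI : IsSimpleModule (K ⊗[F] Dᵐᵒᵖ) D := by
    refine (isSimpleModule_iff _ _).mpr ?_
    refine @IsSimpleOrder.mk _ _ _ ?_ ?_
    · infer_instance
    intro N
    rcases eq_or_ne N ⊥ with h | h
    · exact Or.inl h
    · refine Or.inr (eq_top_iff.mpr fun y _ => ?_)
      obtain ⟨x, hxN, hx0⟩ := N.exists_mem_ne_zero_of_ne_bot h
      have hy : ((1 : K) ⊗ₜ[F] (MulOpposite.op (x⁻¹ * y))) • x = y := by
        rw [tsmul]
        simp [mul_inv_cancel_left₀ hx0]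
      exact hy ▸ N.smul_mem _ hxN
  -- B-linear endomorphisms of D are left multiplications by elements of C
  have endB : ∀ (q : D →ₗ[K ⊗[F] Dᵐᵒᵖ] D), (q 1 ∈ C) ∧ ∀ x, q x = q 1 * x := by
    intro q
    have hqx : ∀ x : D, q x = q 1 * x := by
      intro x
      have h1 : ((1 : K) ⊗ₜ[F] MulOpposite.op x) • (1 : D) = x := by rw [tsmul]; simp
      have h2 := q.map_smul ((1 : K) ⊗ₜ[F] MulOpposite.op x) 1
      rw [h1, tsmul] at h2
      simpa using h2
    refine ⟨mem_cenSf.mpr fun g hg => ?_, hqx⟩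
    have h2 : ((⟨g, hg⟩ : K) ⊗ₜ[F] (1 : Dᵐᵒᵖ)) • (1 : D) = g := by rw [tsmul]; simp
    have h3 := q.map_smul ((⟨g, hg⟩ : K) ⊗ₜ[F] (1 : Dᵐᵒᵖ)) 1
    rw [h2, tsmul, hqx g] at h3
    simpa using h3.symm
  -- semisimplicity of (Fin d → D)
  haveI : IsSemisimpleModule (K ⊗[F] Dᵐᵒᵖ) (Fin d → D) := by
    refine isSemisimpleModule_of_isSemisimpleModule_submodule'
      (p := fun j : Fin d =>
        LinearMap.range (LinearMap.single (K ⊗[F] Dᵐᵒᵖ) (fun _ : Fin d => D) j))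
      (fun j => ?_) (LinearMap.iSup_range_single _ _)
    exact IsSemisimpleModule.congr
      (LinearEquiv.ofInjective _ (Pi.single_injective (M := fun _ : Fin d => D) j)).symm
  have csmul : ∀ (c : C) (y : D), c • y = c.1 * y := fun _ _ => rfl
  have hBC : ∀ (b : K ⊗[F] Dᵐᵒᵖ) (c : C) (y : D), b • (c.1 * y) = c.1 * (b • y) := by
    intro b c y
    induction b using TensorProduct.induction_on with
    | zero => show Φ 0 _ = c.1 * Φ 0 _; simp
    | tmul k e =>
      rw [tsmul, tsmul]
      have hkc : k.1 * c.1 = c.1 * k.1 := mem_cenSf.mp c.2 k.1 k.2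
      calc k.1 * (c.1 * y) * e.unop = (k.1 * c.1) * y * e.unop := by simp only [mul_assoc]
        _ = (c.1 * k.1) * y * e.unop := by rw [hkc]
        _ = c.1 * (k.1 * y * e.unop) := by simp only [mul_assoc]
    | add b1 b2 h1 h2 => rw [add_smul, add_smul, h1, h2, mul_add]
  -- the projection
  set xbar : Fin d → D := fun i => xB i with hxbar
  set N : Submodule (K ⊗[F] Dᵐᵒᵖ) (Fin d → D) := Submodule.span _ {xbar} with hN
  obtain ⟨N', hcompl⟩ := exists_isCompl N
  set q : (Fin d → D) →ₗ[K ⊗[F] Dᵐᵒᵖ] (Fin d → D) :=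
    N.subtype.comp (N.linearProjOfIsCompl N' hcompl) with hq
  have hqN : ∀ z, q z ∈ N := fun z => (N.linearProjOfIsCompl N' hcompl z).2
  have hqid : ∀ z ∈ N, q z = z := by
    intro z hz
    show (N.linearProjOfIsCompl N' hcompl z : Fin d → D) = z
    rw [show N.linearProjOfIsCompl N' hcompl z = ⟨z, hz⟩ from
      Submodule.linearProjOfIsCompl_apply_left hcompl ⟨z, hz⟩]
  set qe : Fin d → Fin d → (D →ₗ[K ⊗[F] Dᵐᵒᵖ] D) := fun i j =>
    (LinearMap.proj i).comp (q.comp (LinearMap.single _ _ j)) with hqedef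
  set u : Fin d → Fin d → D := fun i j => qe i j 1 with hu'
  have hu : ∀ i j, u i j ∈ C := fun i j => (endB (qe i j)).1
  have hqe : ∀ i j x, qe i j x = u i j * x := fun i j => (endB (qe i j)).2
  have hqsum : ∀ (z : Fin d → D) (i), q z i = ∑ j, u i j * z j := by
    intro z i
    have hz : z = ∑ j, Pi.single j (z j) := (Finset.univ_sum_single z).symm
    conv_lhs => rw [hz, map_sum]
    rw [Finset.sum_apply]
    exact Finset.sum_congr rfl fun j _ => hqe i j (z j)
  have hqx : q xbar = xbar := hqid xbar (Submodule.mem_span_singleton_self xbar)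
  -- density: every C-linear endomorphism comes from the algebra
  have densSurj : ∀ f : D →ₗ[C] D, ∃ b : K ⊗[F] Dᵐᵒᵖ, ∀ y, f y = b • y := by
    intro f
    set zbar : Fin d → D := fun i => f (xB i) with hzbar
    have hqz : q zbar = zbar := by
      funext i
      rw [hqsum]
      calc ∑ j, u i j * zbar j = ∑ j, f ((⟨u i j, hu i j⟩ : C) • xB j) := by
            refine Finset.sum_congr rfl fun j _ => ?_
            rw [f.map_smul, csmul]
          _ = f (∑ j, (⟨u i j, hu i j⟩ : C) • xB j) := by rw [map_sum]
          _ = f (q xbar i) := by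
            rw [hqsum]
            congr 1
          _ = zbar i := by rw [hqx]
    have hzN : zbar ∈ N := by rw [← hqz]; exact hqN zbar
    obtain ⟨b, hb⟩ := Submodule.mem_span_singleton.mp hzN
    refine ⟨b, ?_⟩
    have hbx : ∀ i, f (xB i) = b • (xB i) := by
      intro i
      have := congrFun hb i
      exact this.symm
    -- both sides are C-linear and agree on the basis
    let g : D →ₗ[C] D :=
      { toFun := fun y => b • y
        map_add' := fun y z => smul_add b y z
        map_smul' := fun c y => by simp only [RingHom.id_apply]; rw [csmul, csmul]; exact hBC b c y }
    have hfg : f = g := xB.ext fun i => hbx i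
    intro y
    rw [hfg]
    rfl
  -- the linear map Θ
  haveI : SMulCommClass C F D := ⟨fun c a y => by
    rw [csmul, csmul, Algebra.smul_def, Algebra.smul_def, ← mul_assoc, ← Algebra.commutes a c.1,
      mul_assoc]⟩
  let Θ : (K ⊗[F] Dᵐᵒᵖ) →ₗ[F] (D →ₗ[C] D) :=
  { toFun := fun b =>
      { toFun := fun y => b • y
        map_add' := fun y z => smul_add b y z
        map_smul' := fun c y => by
          simp only [RingHom.id_apply]
          rw [csmul, csmul]
          exact hBC b c y }
    map_add' := fun b1 b2 => LinearMap.ext fun y => add_smul b1 b2 y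
    map_smul' := fun a b => LinearMap.ext fun y => by
      simp only [RingHom.id_apply, LinearMap.smul_apply, LinearMap.coe_mk, AddHom.coe_mk]
      show Φ (a • b) y = a • (Φ b y)
      rw [show Φ (a • b) = a • Φ b from Φ.toLinearMap.map_smul a b]
      rfl }
  have Θsurj : Function.Surjective Θ := by
    intro f
    obtain ⟨b, hb⟩ := densSurj f
    exact ⟨b, LinearMap.ext fun y => (hb y).symm⟩
  have Θinj : Function.Injective Θ := by
    rw [injective_iff_map_eq_zero]
    intro b hb0
    have hby : ∀ y : D, b • y = 0 := fun y => congrFun (congrArg (fun g => g.toFun) hb0) y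
    let κ := Basis.ofVectorSpace F K
    let e : (K ⊗[F] Dᵐᵒᵖ) ≃ₗ[F] ((Basis.ofVectorSpaceIndex F K) →₀ Dᵐᵒᵖ) :=
      (TensorProduct.congr κ.repr (LinearEquiv.refl F Dᵐᵒᵖ)).trans
        (TensorProduct.finsuppScalarLeft F Dᵐᵒᵖ _)
    set β := e b with hβ
    have etmul : ∀ (i) (m : Dᵐᵒᵖ), e ((κ i : K) ⊗ₜ[F] m) = Finsupp.single i m := by
      intro i m
      show (TensorProduct.finsuppScalarLeft F Dᵐᵒᵖ _)
        (TensorProduct.congr κ.repr (LinearEquiv.refl F Dᵐᵒᵖ) ((κ i : K) ⊗ₜ[F] m)) = _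
      rw [TensorProduct.congr_tmul, Basis.repr_self]
      rw [TensorProduct.finsuppScalarLeft_apply_tmul]
      rw [Finsupp.sum_single_index]
      · rw [one_smul]; rfl
      · rw [zero_smul, Finsupp.single_zero]
    have hrep : b = β.sum fun i m => (κ i : K) ⊗ₜ[F] m := by
      conv_lhs => rw [← e.symm_apply_apply b, ← hβ]
      conv_lhs => rw [← Finsupp.sum_single β]
      rw [map_finsuppSum e.symm]
      refine Finsupp.sum_congr fun i _ => ?_
      rw [← etmul i (β i), e.symm_apply_apply]
    have hsum0 : ∀ y : D, ∑ i ∈ β.support, ((κ i : K) : D) * y * (β i).unop = 0 := by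
      intro y
      have h0 : b • y = 0 := hby y
      rw [hrep, Finsupp.sum] at h0
      rw [Finset.sum_smul] at h0
      calc ∑ i ∈ β.support, ((κ i : K) : D) * y * (β i).unop
          = ∑ i ∈ β.support, ((κ i : K) ⊗ₜ[F] (β i)) • y :=
            Finset.sum_congr rfl fun i _ => (tsmul _ _ _).symm
        _ = 0 := h0
    have hindep : LinearIndependent F (fun i : Basis.ofVectorSpaceIndex F K => ((κ i : K) : D)) :=
      κ.linearIndependent.map' fK.toLinearMap
        (LinearMap.ker_eq_bot.mpr Subtype.val_injective)
    have hz := indep_aux2 F D hc β.support _ _ hindep hsum0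
    have hβ0 : β = 0 := by
      ext i
      by_cases hi : i ∈ β.support
      · exact MulOpposite.unop_injective (hz i hi)
      · exact Finsupp.notMem_support_iff.mp hi
    rw [hrep, hβ0, Finsupp.sum_zero_index]
  -- dimension count
  have e1 : finrank F (K ⊗[F] Dᵐᵒᵖ) = finrank F K * finrank F D := by
    rw [Module.finrank_tensorProduct]
    congr 1
    exact ((MulOpposite.opLinearEquiv F (M := D)).finrank_eq).symm
  have e2 : finrank F (D →ₗ[C] D) = d * finrank F D := by
    rw [← (xB.constr F (M' := D)).finrank_eq, Module.finrank_pi_fintype,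
      Finset.sum_const, Finset.card_univ, Fintype.card_fin, smul_eq_mul]
  have e3 : finrank F K * finrank F D = d * finrank F D := by
    rw [← e1, ← e2]
    exact (LinearEquiv.ofBijective Θ ⟨Θinj, Θsurj⟩).finrank_eq
  have hD0 : 0 < finrank F D := finrank_pos
  have hkd : finrank F K = d := Nat.eq_of_mul_eq_mul_right hD0 e3
  have e4 : finrank F C * d = finrank F D := Module.finrank_mul_finrank F C D
  have bK : finrank F K = finrank F (sfSub F D K hK) := bridge F D K hK
  have bC : finrank F C = finrank F (sfSub F D C hCr) := bridge F D C hCr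
  rw [← bK, ← bC, hkd, mul_comm]
  exact e4

/-- Part (a): any commutative subfield containing `F` has `F`-dimension at most `n`. -/
theorem le_part (F D : Type*) [Field F] [DivisionRing D] [Algebra F D]
    (hc : ∀ x : D, (∀ y : D, y * x = x * y) → ∃ c : F, algebraMap F D c = x)
    [FiniteDimensional F D] (n : ℕ) (hn : Module.finrank F D = n ^ 2)
    (L : Subfield D) (hL : Set.range (algebraMap F D) ⊆ (L : Set D))
    (hLcomm : ∀ x ∈ L, ∀ y ∈ L, x * y = y * x) :
    Module.finrank F (sfSub F D L hL) ≤ n := by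
  have h := crux F D hc L hL (range_subset_cenSf F D _)
  have hsub : sfSub F D L hL ≤ sfSub F D (cenSf (L : Set D)) (range_subset_cenSf F D _) :=
    fun x hx => mem_cenSf.mpr fun g hg => hLcomm g hg x hx
  have hmono := Submodule.finrank_mono hsub
  have hsq : Module.finrank F (sfSub F D L hL) ^ 2 ≤ n ^ 2 := by
    calc Module.finrank F (sfSub F D L hL) ^ 2
        = Module.finrank F (sfSub F D L hL) * Module.finrank F (sfSub F D L hL) := sq _
      _ ≤ Module.finrank F (sfSub F D L hL) *
            Module.finrank F (sfSub F D (cenSf (L : Set D)) (range_subset_cenSf F D _)) :=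
          Nat.mul_le_mul_left _ hmono
      _ = Module.finrank F D := h
      _ = n ^ 2 := hn
  exact (Nat.pow_le_pow_iff_left (by norm_num)).mp hsq

/-- **Lemma (Bien, Lemma 3.0).** Let `D` be a division ring whose center is the field `F`,
with `dim_F D = n ^ 2` finite (so `D` has degree `n` over `F`), and let `K` be a subfield
of `D` containing `F` (in Mathlib, `Subfield D` means a division subring, so we require in
addition that `K` is commutative). Then `dim_F K ≤ n`, and `dim_F K = n` holds if and only
if `K` is a maximal subfield of `D`, i.e. maximal with respect to inclusion among the
(commutative) subfields of `D` containing `F`. -/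
theorem finrank_subfield_le_and_eq_iff_maximal
    (F D : Type*) [Field F] [DivisionRing D] [Algebra F D]
    (hcenter : Set.range (algebraMap F D) = Set.center D)
    [FiniteDimensional F D] (n : ℕ) (hn : Module.finrank F D = n ^ 2)
    (K : Subfield D) (hK : Set.range (algebraMap F D) ⊆ (K : Set D))
    (hKcomm : ∀ x ∈ K, ∀ y ∈ K, x * y = y * x) :
    let i : F →+* K := (algebraMap F D).codRestrict K.toSubring fun x => hK ⟨x, rfl⟩
    let _ : Algebra F K := i.toAlgebra' fun c x =>
      Subtype.ext (hKcomm _ (i c).2 _ x.2)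
    Module.finrank F K ≤ n ∧
      (Module.finrank F K = n ↔
        Maximal (fun L : Subfield D => Set.range (algebraMap F D) ⊆ (L : Set D) ∧
          ∀ x ∈ L, ∀ y ∈ L, x * y = y * x) K) := by
  intro i _inst
  have hc : ∀ x : D, (∀ y : D, y * x = x * y) → ∃ c : F, algebraMap F D c = x := by
    intro x hx
    have hxc : x ∈ Set.center D := Semigroup.mem_center_iff.mpr hx
    rw [← hcenter] at hxc
    exact hxc
  have hCr := range_subset_cenSf F D (K : Set D)
  have bK : Module.finrank F K = Module.finrank F (sfSub F D K hK) := bridge F D K hK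
  have hKC : sfSub F D K hK ≤ sfSub F D (cenSf (K : Set D)) hCr :=
    fun x hx => mem_cenSf.mpr fun g hg => hKcomm g hg x hx
  have hcrux := crux F D hc K hK hCr
  have hle : Module.finrank F K ≤ n := by
    rw [bK]; exact le_part F D hc n hn K hK hKcomm
  refine ⟨hle, ?_, ?_⟩
  · -- `finrank = n` implies maximal
    intro hk
    refine ⟨⟨hK, hKcomm⟩, ?_⟩
    intro L hL hKL
    have hLsub : sfSub F D K hK ≤ sfSub F D L hL.1 := fun x hx => hKL hx
    have hLle : Module.finrank F (sfSub F D L hL.1) ≤ n := le_part F D hc n hn L hL.1 hL.2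
    have hfr : Module.finrank F (sfSub F D K hK) = Module.finrank F (sfSub F D L hL.1) :=
      le_antisymm (Submodule.finrank_mono hLsub) (hLle.trans (le_of_eq (by rw [← bK, hk])))
    have heq : sfSub F D K hK = sfSub F D L hL.1 :=
      Submodule.eq_of_le_of_finrank_eq hLsub hfr
    intro x hx
    have : x ∈ sfSub F D L hL.1 := hx
    rw [← heq] at this
    exact this
  · -- maximal implies `finrank = n`
    intro hmax
    have hCK : ∀ u ∈ cenSf (K : Set D), u ∈ K := by
      intro u hu
      set A : Subfield D := cenSf ((K : Set D) ∪ {u}) with hA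
      have hKuA : ((K : Set D) ∪ {u}) ⊆ (A : Set D) := by
        rintro g (hg | hg)
        · refine mem_cenSf.mpr ?_
          rintro g' (hg' | hg')
          · exact hKcomm g' hg' g hg
          · rw [Set.mem_singleton_iff] at hg'
            subst hg'
            exact (mem_cenSf.mp hu g hg).symm
        · rw [Set.mem_singleton_iff] at hg
          subst hg
          refine mem_cenSf.mpr ?_
          rintro g' (hg' | hg')
          · exact mem_cenSf.mp hu g' hg'
          · rw [Set.mem_singleton_iff] at hg'
            subst hg'
            rfl
      set L : Subfield D := cenSf (A : Set D) with hL
      have hLA : (L : Set D) ⊆ (A : Set D) := by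
        intro x hx
        refine mem_cenSf.mpr fun g hg => ?_
        exact mem_cenSf.mp hx g (hKuA hg)
      have hLP : Set.range (algebraMap F D) ⊆ (L : Set D) ∧
          ∀ x ∈ L, ∀ y ∈ L, x * y = y * x := by
        refine ⟨range_subset_cenSf F D _, fun x hx y hy => ?_⟩
        exact mem_cenSf.mp hy x (hLA hx)
      have hKL : K ≤ L := by
        intro g hg
        refine mem_cenSf.mpr fun a ha => ?_
        exact (mem_cenSf.mp ha g (Or.inl hg)).symm
      have huL : u ∈ L := by
        refine mem_cenSf.mpr fun a ha => ?_
        exact (mem_cenSf.mp ha u (Or.inr rfl)).symm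
      exact hmax.2 hLP hKL huL
    have hsubCK : sfSub F D (cenSf (K : Set D)) hCr ≤ sfSub F D K hK :=
      fun x hx => hCK x hx
    have heqr : Module.finrank F (sfSub F D (cenSf (K : Set D)) hCr) =
        Module.finrank F (sfSub F D K hK) :=
      le_antisymm (Submodule.finrank_mono hsubCK) (Submodule.finrank_mono hKC)
    have hsq : Module.finrank F K ^ 2 = n ^ 2 := by
      rw [sq, ← hn, ← hcrux, bK, heqr]
    exact Nat.pow_left_injective (by norm_num) hsq
end

section
/- Let F be a field, n > 2 an integer, a_1, …, a_{n−1} ∈ F, and b_1, …, b_{n−1} ∈ F. Let A ∈ M_n(F) be the matrix whose (i+1, i)-entry is 1 for 1 ≤ i ≤ n−1, whose (i, n)-entry is a_i for 1 ≤ i ≤ n−1, and whose other entries are 0; and let B ∈ M_n(F) be the matrix whose (i, i+1)-entry is b_i for 1 ≤ i ≤ n−1 and whose other entries are 0. Then AB − BA is upper triangular and its diagonal entries are −b_1, b_1 − b_2, b_2 − b_3, …, b_{n−2} − b_{n−1}, b_{n−1} (in that order). -/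
/-- **Computation (from Bien, Lemma 3.3).** Let `F` be a field, `n > 2`, and let
`a 1, …, a (n-1), b 1, …, b (n-1) ∈ F`. Let `A` be the `n × n` matrix (rows and columns
indexed `1, …, n`) whose `(i+1, i)`-entry is `1` for `1 ≤ i ≤ n-1`, whose `(i, n)`-entry
is `a i` for `1 ≤ i ≤ n-1`, and whose other entries are `0`; and let `B` be the matrix
whose `(i, i+1)`-entry is `b i` for `1 ≤ i ≤ n-1` and whose other entries are `0`. Then
`A * B - B * A` is upper triangular and its diagonal entries are
`-b 1, b 1 - b 2, b 2 - b 3, …, b (n-2) - b (n-1), b (n-1)` in that order.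
(Below, `Fin n` gives `0`-based indexing, so index `i : Fin n` corresponds to `i + 1`.) -/
theorem add_commutator_upper_triangular
    (F : Type*) [Field F] (n : ℕ) (hn : 2 < n) (a b : ℕ → F)
    (A B : Matrix (Fin n) (Fin n) F)
    (hA : A = Matrix.of fun i j : Fin n =>
      if (i : ℕ) = (j : ℕ) + 1 then 1
      else if (j : ℕ) = n - 1 ∧ (i : ℕ) < n - 1 then a ((i : ℕ) + 1)
      else 0)
    (hB : B = Matrix.of fun i j : Fin n =>
      if (j : ℕ) = (i : ℕ) + 1 then b ((i : ℕ) + 1) else 0) :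
    (∀ i j : Fin n, (j : ℕ) < (i : ℕ) → (A * B - B * A) i j = 0) ∧
      (∀ i : Fin n, (A * B - B * A) i i =
        if (i : ℕ) = 0 then -b 1
        else if (i : ℕ) = n - 1 then b (n - 1)
        else b (i : ℕ) - b ((i : ℕ) + 1)) := by
  subst hA hB
  constructor
  · intro i j hij
    simp only [Matrix.sub_apply, Matrix.mul_apply, Matrix.of_apply]
    rw [Finset.sum_eq_zero, Finset.sum_eq_zero, sub_zero]
    · intro k _
      split_ifs <;> first | (exfalso; omega) | ring
    · intro k _
      split_ifs <;> first | (exfalso; omega) | ring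
  · intro i
    have hin : (i : ℕ) < n := i.isLt
    simp only [Matrix.sub_apply, Matrix.mul_apply, Matrix.of_apply]
    rcases Nat.eq_zero_or_pos (i : ℕ) with h0 | h0
    · have h1 : (1 : ℕ) < n := by omega
      rw [Finset.sum_eq_zero, Finset.sum_eq_single_of_mem (⟨1, h1⟩ : Fin n)
        (Finset.mem_univ _)]
      · simp only [Fin.val_mk]
        simp only [h0]
        split_ifs <;> first | (exfalso; omega) | (rw [zero_add]; ring)
      · intro k _ hk
        have hk' : (k : ℕ) ≠ 1 := fun h => hk (Fin.ext (by simp [h]))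
        split_ifs <;> first | (exfalso; omega) | ring
      · intro k _
        split_ifs <;> first | (exfalso; omega) | ring
    · have hm : (i : ℕ) - 1 < n := by omega
      rcases eq_or_ne (i : ℕ) (n - 1) with hl | hl
      · rw [Finset.sum_eq_single_of_mem (⟨(i : ℕ) - 1, hm⟩ : Fin n) (Finset.mem_univ _),
          Finset.sum_eq_zero, sub_zero]
        · simp only [Fin.val_mk]
          simp only [hl, show n - 1 - 1 + 1 = n - 1 by omega]
          split_ifs <;> first | (exfalso; omega) | ring
        · intro k _
          split_ifs <;> first | (exfalso; omega) | ring
        · intro k _ hk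
          have hk' : (k : ℕ) ≠ (i : ℕ) - 1 := fun h => hk (Fin.ext (by simp [h]))
          split_ifs <;> first | (exfalso; omega) | ring
      · have hp : (i : ℕ) + 1 < n := by omega
        rw [Finset.sum_eq_single_of_mem (⟨(i : ℕ) - 1, hm⟩ : Fin n) (Finset.mem_univ _),
          Finset.sum_eq_single_of_mem (⟨(i : ℕ) + 1, hp⟩ : Fin n) (Finset.mem_univ _)]
        · simp only [Fin.val_mk]
          rw [show (i : ℕ) - 1 + 1 = (i : ℕ) by omega]
          split_ifs <;> first | (exfalso; omega) | ring
        · intro k _ hk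
          have hk' : (k : ℕ) ≠ (i : ℕ) + 1 := fun h => hk (Fin.ext (by simp [h]))
          split_ifs <;> first | (exfalso; omega) | ring
        · intro k _ hk
          have hk' : (k : ℕ) ≠ (i : ℕ) - 1 := fun h => hk (Fin.ext (by simp [h]))
          split_ifs <;> first | (exfalso; omega) | ring
end
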